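/- For a rank-r matrix G ∈ ℝ^{n×m}, there exist row indices I with #I = r and column indices J with #J = r such that the submatrix G|_{I×J} is invertible and G = G|_{·×J} · (G|_{I×J})^{-1} · G|_{I×·} (the full skeleton/CUR decomposition). -/

import Mathlib

open Matrix

/-- From a matrix of rank `r`, extract `r` linearly independent rows spanning the row space. -/
lemma cur_exists_rows {p q r : ℕ} (A : Matrix (Fin p) (Fin q) ℝ) (hr : A.rank = r) :
    ∃ I : Fin r → Fin p, Function.Injective I ∧
      LinearIndependent ℝ (fun k => A (I k)) ∧
      Submodule.span ℝ (Set.range (fun k => A (I k))) = Submodule.span ℝ (Set.range A) := by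
  classical
  obtain ⟨b, hb₁, hb₂, hb₃⟩ := exists_linearIndependent ℝ (Set.range A)
  haveI : Fintype b := ((Set.finite_range A).subset hb₁).fintype
  have hcard : Fintype.card b = r := by
    have h := linearIndependent_iff_card_eq_finrank_span.mp hb₃
    rw [Subtype.range_coe] at h
    rw [h, Set.finrank, hb₂, ← hr, A.rank_eq_finrank_span_row, Matrix.row]
  let e : Fin r ≃ b := (Fintype.equivFinOfCardEq hcard).symm
  have hmem : ∀ k : Fin r, (e k : Fin q → ℝ) ∈ Set.range A := fun k => hb₁ (e k).2
  choose I hI using hmem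
  have hAI : ∀ k, A (I k) = (e k : Fin q → ℝ) := hI
  have hrange : (fun k => A (I k)) = (Subtype.val ∘ e) := by
    funext k; rw [hAI]; rfl
  refine ⟨I, ?_, ?_, ?_⟩
  · intro k k' hkk'
    have : (e k : Fin q → ℝ) = (e k' : Fin q → ℝ) := by rw [← hAI, ← hAI, hkk']
    exact e.injective (Subtype.ext this)
  · rw [hrange]
    exact hb₃.comp e e.injective
  · rw [hrange]
    have : Set.range (Subtype.val ∘ e) = b := by
      rw [Set.range_comp, Equiv.range_eq_univ, Set.image_univ, Subtype.range_coe]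
    rw [this, hb₂]

/-- Full skeleton/CUR decomposition: a rank-`r` matrix `G ∈ ℝ^{n×m}` has `r` rows and
`r` columns such that the intersection submatrix is invertible and
`G = G|_{·×J} (G|_{I×J})⁻¹ G|_{I×·}`. -/
theorem cur_decomposition
    {n m : ℕ} (G : Matrix (Fin n) (Fin m) ℝ) (r : ℕ) (hr : G.rank = r) :
    ∃ (I : Fin r → Fin n) (J : Fin r → Fin m),
      Function.Injective I ∧ Function.Injective J ∧
      IsUnit (G.submatrix I J) ∧
      G = G.submatrix id J * (G.submatrix I J)⁻¹ * G.submatrix I id := by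
  classical
  obtain ⟨I, hIinj, hIindep, hIspan⟩ := cur_exists_rows G hr
  have hrT : Gᵀ.rank = r := by rw [Matrix.rank_transpose, hr]
  obtain ⟨J, hJinj, hJindep, hJspan⟩ := cur_exists_rows Gᵀ hrT
  -- coefficients expressing each row of G in terms of the rows indexed by I
  have hrow : ∀ i, ∃ d : Fin r → ℝ, ∑ k, d k • G (I k) = G i := by
    intro i
    rw [← Submodule.mem_span_range_iff_exists_fun, hIspan]
    exact Submodule.subset_span (Set.mem_range_self i)
  choose d hd using hrow
  set D : Matrix (Fin n) (Fin r) ℝ := Matrix.of d with hDdef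
  have hD : G = D * G.submatrix I id := by
    ext i j
    rw [Matrix.mul_apply]
    have := congrFun (hd i) j
    simpa [Finset.sum_apply, hDdef] using this.symm
  -- coefficients expressing each column of G in terms of the columns indexed by J
  have hcol : ∀ j, ∃ c : Fin r → ℝ, ∑ k, c k • Gᵀ (J k) = Gᵀ j := by
    intro j
    rw [← Submodule.mem_span_range_iff_exists_fun, hJspan]
    exact Submodule.subset_span (Set.mem_range_self j)
  choose c hc using hcol
  set C : Matrix (Fin r) (Fin m) ℝ := Matrix.of (fun k j => c j k) with hCdef
  have hC : G = G.submatrix id J * C := by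
    ext i j
    rw [Matrix.mul_apply]
    have := congrFun (hc j) i
    simp only [Finset.sum_apply, Pi.smul_apply, smul_eq_mul, Matrix.transpose_apply] at this
    simp only [Matrix.submatrix_apply, id_eq, hCdef, Matrix.of_apply]
    rw [← this]
    exact Finset.sum_congr rfl fun k _ => mul_comm _ _
  -- the r×m matrix of selected rows
  have hRows : G.submatrix I id = G.submatrix I J * C := by
    conv_lhs => rw [hC]
    ext k j
    simp [Matrix.mul_apply]
  have hrankRows : (G.submatrix I id).rank = r := by
    have : LinearIndependent ℝ (fun k => (G.submatrix I id) k) := by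
      have : (fun k => (G.submatrix I id) k) = fun k => G (I k) := by
        funext k; funext j; rfl
      rw [this]; exact hIindep
    rw [LinearIndependent.rank_matrix (M := G.submatrix I id) this, Fintype.card_fin]
  -- the intersection submatrix is invertible
  have hrankU : (G.submatrix I J).rank = r := by
    refine le_antisymm ((G.submatrix I J).rank_le_card_height.trans (Fintype.card_fin r).le) ?_
    calc r = (G.submatrix I id).rank := hrankRows.symm
      _ = (G.submatrix I J * C).rank := by rw [hRows]
      _ ≤ (G.submatrix I J).rank := Matrix.rank_mul_le_left _ _
  have hU : IsUnit (G.submatrix I J) := by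
    rw [← Matrix.linearIndependent_rows_iff_isUnit]
    rw [linearIndependent_iff_card_eq_finrank_span, Fintype.card_fin, Set.finrank,
      ← Matrix.rank_eq_finrank_span_row, hrankU]
  -- the selected columns: G|_{·×J} = D * G|_{I×J}
  have hCols : G.submatrix id J = D * G.submatrix I J := by
    conv_lhs => rw [hD]
    ext i k
    simp [Matrix.mul_apply]
  refine ⟨I, J, hIinj, hJinj, hU, ?_⟩
  rw [hCols, Matrix.mul_assoc D,
    Matrix.mul_nonsing_inv _ (Matrix.isUnit_iff_isUnit_det _ |>.mp hU), Matrix.mul_one, ← hD]
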